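/- Let K be a field, L a commutative K-algebra equipped with a fixed K-vector space isomorphism L ≅ K^r, and n, d ≥ 1 integers with m = binom(n+d, n). Then there exist finitely many homogeneous polynomials H_1, …, H_t in r(n+1) variables over K with the following property: for every field extension K'/K, setting L' = L ⊗_K K' and letting φ : (L')^{n+1} → (K')^{r(n+1)} be the isomorphism of K'-vector spaces induced by the fixed isomorphism L ≅ K^r, and for every P = (a_0, …, a_n) ∈ (L')^{n+1}, the K'-vector space {F ∈ S_{n,d}(K') : F(P) = 0} has dimension strictly greater than max(m − r, 0) if and only if H_i(φ(P)) = 0 for every 1 ≤ i ≤ t. Here F(P) denotes the evaluation of F at (a_0, …, a_n) in the ring L'. -/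

import Mathlib

open TensorProduct

universe u v w

section Stmt6AuxSection

open Matrix Module MvPolynomial

namespace Stmt6Aux


variable {F : Type*} [Field F] {ι κ : Type*} [Fintype ι] [Fintype κ]

lemma rank_ge_of_indep (M : Matrix ι κ F) {s : ℕ} (α : Fin s → ι)
    (h : LinearIndependent F (fun i => M (α i))) : s ≤ M.rank := by
  rw [M.rank_eq_finrank_span_row]
  have h1 : Submodule.span F (Set.range fun i => M (α i)) ≤ Submodule.span F (Set.range M) :=
    Submodule.span_mono (Set.range_comp_subset_range α M)
  have h2 : finrank F (Submodule.span F (Set.range fun i => M (α i))) = s := by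
    rw [finrank_span_eq_card h, Fintype.card_fin]
  calc s = _ := h2.symm
    _ ≤ finrank F (Submodule.span F (Set.range M)) := Submodule.finrank_mono h1

lemma exists_indep_rows (M : Matrix ι κ F) {s : ℕ} (h : s ≤ M.rank) :
    ∃ α : Fin s → ι, LinearIndependent F (fun i => M (α i)) := by
  classical
  obtain ⟨b, hb_sub, hb_span, hb_ind⟩ := exists_linearIndependent F (Set.range M)
  have hbfin : b.Finite := (Set.finite_range M).subset hb_sub
  haveI := hbfin.fintype
  have hcard : M.rank ≤ Fintype.card b := by
    rw [M.rank_eq_finrank_span_row]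
    show finrank F (Submodule.span F (Set.range M)) ≤ _
    rw [← hb_span, finrank_span_set_eq_card hb_ind]
    simp [Set.toFinset_card]
  obtain ⟨f⟩ := Function.Embedding.nonempty_of_card_le
    (show Fintype.card (Fin s) ≤ Fintype.card b by rw [Fintype.card_fin]; omega)
  choose α hα using fun i => hb_sub (f i).2
  refine ⟨α, ?_⟩
  have : (fun i => M (α i)) = (fun x : b => (x : κ → F)) ∘ f := by
    funext i; exact hα i
  rw [this]
  exact hb_ind.comp f f.injective

lemma rank_lt_iff_minors (M : Matrix ι κ F) (s : ℕ) :
    M.rank < s ↔ ∀ (α : Fin s → ι) (β : Fin s → κ), (M.submatrix α β).det = 0 := by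
  classical
  constructor
  · intro h α β
    by_contra hdet
    have hunit : IsUnit (M.submatrix α β) := (isUnit_iff_isUnit_det _).2 (Ne.isUnit hdet)
    have hrows : LinearIndependent F (fun i => (M.submatrix α β) i) :=
      linearIndependent_rows_iff_isUnit.2 hunit
    have hcomp : LinearIndependent F ((LinearMap.funLeft F F β) ∘ fun i => M (α i)) := by
      convert hrows using 1
      rfl
    have := rank_ge_of_indep M α (LinearIndependent.of_comp _ hcomp)
    omega
  · intro h
    by_contra hrank
    push_neg at hrank
    obtain ⟨α, hα⟩ := exists_indep_rows M hrank
    set B := M.submatrix α (id : κ → κ) with hB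
    have hBrows : LinearIndependent F (fun i => B i) := hα
    have hBrank : s ≤ Bᵀ.rank := by
      rw [Matrix.rank_transpose]
      exact rank_ge_of_indep B id hBrows
    obtain ⟨β, hβ⟩ := exists_indep_rows Bᵀ hBrank
    have hrows2 : LinearIndependent F (fun i => (M.submatrix α β)ᵀ i) := hβ
    have hunit : IsUnit (M.submatrix α β)ᵀ := linearIndependent_rows_iff_isUnit.1 hrows2
    have : (M.submatrix α β).det ≠ 0 := by
      have := (isUnit_iff_isUnit_det _).1 hunit
      rw [Matrix.det_transpose] at this
      exact this.ne_zero
    exact this (h α β)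



/-- Degree-`d` exponent vectors. -/
abbrev DegSet (N d : ℕ) := {μ : Fin N →₀ ℕ // μ.degree = d}

noncomputable def degEquivSym (N d : ℕ) : DegSet N d ≃ Sym (Fin N) d where
  toFun μ := ⟨Finsupp.toMultiset μ.1, by
    rw [Finsupp.card_toMultiset]; exact μ.2⟩
  invFun s := ⟨Multiset.toFinsupp s.1, by
    have h := Finsupp.card_toMultiset (Multiset.toFinsupp s.1)
    rw [Multiset.toFinsupp_toMultiset] at h
    have h2 : (Multiset.toFinsupp s.1).degree = Multiset.card s.1 := h.symm
    rw [h2]; exact s.2⟩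
  left_inv μ := Subtype.ext (Finsupp.toMultiset_toFinsupp μ.1)
  right_inv s := Subtype.ext (Multiset.toFinsupp_toMultiset s.1)

noncomputable instance (N d : ℕ) : Fintype (DegSet N d) :=
  Fintype.ofEquiv _ (degEquivSym N d).symm

lemma card_degSet (n d : ℕ) :
    Fintype.card (DegSet (n + 1) d) = (n + d).choose n := by
  rw [Fintype.card_congr (degEquivSym (n + 1) d), Sym.card_sym_eq_choose]
  rw [Fintype.card_fin]
  have h1 : n + 1 + d - 1 = n + d := by omega
  rw [h1]
  have := Nat.choose_symm (show d ≤ n + d by omega)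
  rw [show n + d - d = n by omega] at this
  exact this.symm



variable (F : Type*) [Field F]

lemma homog_eq_span (N d : ℕ) :
    homogeneousSubmodule (Fin N) F d =
      Submodule.span F (Set.range fun μ : DegSet N d =>
        (monomial μ.1 (1:F) : MvPolynomial (Fin N) F)) := by
  rw [homogeneousSubmodule_eq_finsupp_supported, AddMonoidAlgebra.supported_eq_span_single]
  congr 1
  rw [Set.image_eq_range]
  simp only [MvPolynomial.single_eq_monomial]
  rfl

instance (N d : ℕ) : Finite ↑{μ : Fin N →₀ ℕ | μ.degree = d} :=
  Finite.of_equiv (DegSet N d) (Equiv.subtypeEquivRight (fun _ => Iff.rfl))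

noncomputable def homogEquiv (N d : ℕ) :
    homogeneousSubmodule (Fin N) F d ≃ₗ[F] (DegSet N d → F) :=
  ((LinearEquiv.ofEq _ _ (homogeneousSubmodule_eq_finsupp_supported (Fin N) F d)).trans
    ((AddMonoidAlgebra.supportedEquivFinsupp (S := F) (R := F) _).trans
      (Finsupp.linearEquivFunOnFinite F F _))).trans
    (LinearEquiv.funCongrLeft F F (Equiv.subtypeEquivRight (fun _ => Iff.rfl)))

instance (N d : ℕ) : FiniteDimensional F (homogeneousSubmodule (Fin N) F d) :=
  Module.Finite.equiv (homogEquiv F N d).symm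

lemma finrank_homog (N d : ℕ) :
    finrank F (homogeneousSubmodule (Fin N) F d) = Fintype.card (DegSet N d) := by
  rw [(homogEquiv F N d).finrank_eq, Module.finrank_fintype_fun_eq_card]


variable (K : Type u) (L : Type v) [Field K] [CommRing L] [Algebra K L]
variable {r : ℕ} (b : Basis (Fin r) K L) (n : ℕ)

/-- The generic point: `A j = ∑ k, X (j,k) ⊗ b k`. -/
noncomputable def genA (j : Fin (n + 1)) :
    MvPolynomial (Fin (n + 1) × Fin r) K ⊗[K] L :=
  ∑ k : Fin r, (X (j, k) : MvPolynomial (Fin (n + 1) × Fin r) K) ⊗ₜ[K] b k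

/-- Universal coordinate polynomials of monomial evaluations. -/
noncomputable def Epoly (μ : Fin (n + 1) →₀ ℕ) (k : Fin r) :
    MvPolynomial (Fin (n + 1) × Fin r) K :=
  (b.baseChange (MvPolynomial (Fin (n + 1) × Fin r) K)).repr
    (∏ j : Fin (n + 1), (genA K L b n j) ^ (μ j)) k

variable {K' : Type w} [CommRing K'] [Algebra K K']

/-- Specialization homomorphism. -/
noncomputable def specHom (c : Fin (n + 1) × Fin r → K') :
    (MvPolynomial (Fin (n + 1) × Fin r) K ⊗[K] L) →ₐ[K] K' ⊗[K] L :=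
  Algebra.TensorProduct.map (aeval c) (AlgHom.id K L)

lemma repr_specHom (c : Fin (n + 1) × Fin r → K')
    (x : MvPolynomial (Fin (n + 1) × Fin r) K ⊗[K] L) (k : Fin r) :
    (b.baseChange K').repr (specHom K L n c x) k
      = aeval c ((b.baseChange (MvPolynomial (Fin (n + 1) × Fin r) K)).repr x k) := by
  induction x using TensorProduct.induction_on with
  | zero => simp
  | tmul p l =>
      simp only [specHom, Algebra.TensorProduct.map_tmul, AlgHom.coe_id, id_eq,
        Basis.baseChange_repr_tmul]
      rw [_root_.map_smul]
  | add x y hx hy => simp [map_add, hx, hy]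

lemma specHom_genA (P : Fin (n + 1) → K' ⊗[K] L) (j : Fin (n + 1)) :
    specHom K L n (fun jk => (b.baseChange K').repr (P jk.1) jk.2) (genA K L b n j) = P j := by
  rw [genA, map_sum]
  simp only [specHom, Algebra.TensorProduct.map_tmul, AlgHom.coe_id, id_eq, aeval_X]
  conv_rhs => rw [← Basis.sum_repr (b.baseChange K') (P j)]
  refine Finset.sum_congr rfl fun k _ => ?_
  rw [Basis.baseChange_apply, TensorProduct.smul_tmul', smul_eq_mul, mul_one]

set_option maxHeartbeats 1000000 in
lemma aeval_Epoly (P : Fin (n + 1) → K' ⊗[K] L) (μ : Fin (n + 1) →₀ ℕ) (k : Fin r) :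
    aeval (fun jk : Fin (n + 1) × Fin r => (b.baseChange K').repr (P jk.1) jk.2)
        (Epoly K L b n μ k)
      = (b.baseChange K').repr (∏ j : Fin (n + 1), (P j) ^ (μ j)) k := by
  set c : Fin (n + 1) × Fin r → K' :=
    fun jk => (b.baseChange K').repr (P jk.1) jk.2 with hc
  rw [Epoly]
  have h := repr_specHom K L b n c (∏ j : Fin (n + 1), (genA K L b n j) ^ (μ j)) k
  rw [← h]
  have h2 : specHom K L n c (∏ j : Fin (n + 1), (genA K L b n j) ^ (μ j))
      = ∏ j : Fin (n + 1), (P j) ^ (μ j) := by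
    rw [map_prod (specHom K L n c) (fun j : Fin (n + 1) => (genA K L b n j) ^ (μ j)) Finset.univ]
    refine Finset.prod_congr rfl fun j _ => ?_
    rw [map_pow, hc, specHom_genA]
  rw [h2]

lemma aeval_monomial_one {F : Type*} [CommSemiring F] {S : Type*} [CommSemiring S] [Algebra F S]
    {N : ℕ} (P : Fin N → S) (μ : Fin N →₀ ℕ) :
    aeval P (monomial μ (1 : F)) = ∏ j : Fin N, P j ^ μ j := by
  rw [aeval_monomial, _root_.map_one, one_mul]
  rw [Finsupp.prod]
  refine Finset.prod_subset (Finset.subset_univ _) fun j _ hj => ?_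
  rw [Finsupp.notMem_support_iff.1 hj, pow_zero]

lemma degree_eq_sum {N : ℕ} (μ : Fin N →₀ ℕ) : μ.degree = ∑ j : Fin N, μ j := by
  rw [Finsupp.degree]
  exact Finset.sum_subset (Finset.subset_univ _) fun j _ hj =>
    Finsupp.notMem_support_iff.1 hj



variable (K : Type u) (L : Type v) [Field K] [CommRing L] [Algebra K L]
variable (r : ℕ) (b : Basis (Fin r) K L) (n : ℕ)

/-- Graded pieces of the tensor product. -/
noncomputable def Wdeg (c : ℕ) : Submodule K (MvPolynomial (Fin (n + 1) × Fin r) K ⊗[K] L) :=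
  Submodule.span K
    {x | ∃ p ∈ homogeneousSubmodule (Fin (n + 1) × Fin r) K c, ∃ l : L, x = p ⊗ₜ[K] l}

lemma Wdeg_mul {a c : ℕ} {x y : MvPolynomial (Fin (n + 1) × Fin r) K ⊗[K] L}
    (hx : x ∈ Wdeg K L r n a) (hy : y ∈ Wdeg K L r n c) : x * y ∈ Wdeg K L r n (a + c) := by
  have hle : Wdeg K L r n a * Wdeg K L r n c ≤ Wdeg K L r n (a + c) := by
    rw [Wdeg, Wdeg, Submodule.span_mul_span]
    refine Submodule.span_le.2 ?_
    rintro z hz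
    obtain ⟨x', hx', y', hy', rfl⟩ := Set.mem_mul.1 hz
    obtain ⟨p, hp, l, rfl⟩ := hx'
    obtain ⟨q, hq, l', rfl⟩ := hy'
    apply Submodule.subset_span
    exact ⟨p * q, hp.mul hq, l * l', by rw [Algebra.TensorProduct.tmul_mul_tmul]⟩
  exact hle (Submodule.mul_mem_mul hx hy)

lemma Wdeg_one_mem : (1 : MvPolynomial (Fin (n + 1) × Fin r) K ⊗[K] L) ∈ Wdeg K L r n 0 :=
  Submodule.subset_span ⟨1, isHomogeneous_one _ _, 1, Algebra.TensorProduct.one_def⟩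

lemma Wdeg_pow {x : MvPolynomial (Fin (n + 1) × Fin r) K ⊗[K] L}
    (hx : x ∈ Wdeg K L r n 1) (e : ℕ) : x ^ e ∈ Wdeg K L r n e := by
  induction e with
  | zero => simpa using Wdeg_one_mem K L r n
  | succ e ih =>
      rw [pow_succ]
      exact Wdeg_mul K L r n ih hx

lemma Wdeg_prod {N : ℕ} (x : Fin N → MvPolynomial (Fin (n + 1) × Fin r) K ⊗[K] L)
    (h : ∀ j, x j ∈ Wdeg K L r n 1) (f : Fin N → ℕ) (s : Finset (Fin N)) :
    (∏ j ∈ s, x j ^ f j) ∈ Wdeg K L r n (∑ j ∈ s, f j) := by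
  classical
  induction s using Finset.cons_induction with
  | empty => simpa using Wdeg_one_mem K L r n
  | cons j s hj ih =>
      rw [Finset.prod_cons, Finset.sum_cons]
      exact Wdeg_mul K L r n (Wdeg_pow K L r n (h j) (f j)) ih

lemma genA_mem_Wdeg (j : Fin (n + 1)) : genA K L b n j ∈ Wdeg K L r n 1 := by
  rw [genA]
  exact Submodule.sum_mem _ fun k _ =>
    Submodule.subset_span ⟨X (j, k), isHomogeneous_X _ _, b k, rfl⟩

lemma repr_Wdeg {c : ℕ} {x : MvPolynomial (Fin (n + 1) × Fin r) K ⊗[K] L}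
    (hx : x ∈ Wdeg K L r n c) (k : Fin r) :
    ((b.baseChange (MvPolynomial (Fin (n + 1) × Fin r) K)).repr x k).IsHomogeneous c := by
  induction hx using Submodule.span_induction with
  | mem z hz =>
      obtain ⟨p, hp, l, rfl⟩ := hz
      rw [Basis.baseChange_repr_tmul]
      exact Submodule.smul_mem _ _ hp
  | zero => simpa using isHomogeneous_zero _ _ _
  | add z w _ _ hz hw => simpa [map_add] using hz.add hw
  | smul a z _ hz =>
      have : (a • z) = (algebraMap K (MvPolynomial (Fin (n + 1) × Fin r) K) a) • z :=
        (IsScalarTower.algebraMap_smul _ a z).symm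
      rw [this, _root_.map_smul]
      simp only [Finsupp.smul_apply]
      rw [algebraMap_eq, smul_eq_mul]
      exact hz.C_mul a

lemma Epoly_isHomogeneous (μ : Fin (n + 1) →₀ ℕ) (k : Fin r) :
    (Epoly K L b n μ k).IsHomogeneous μ.degree := by
  rw [Epoly, degree_eq_sum]
  exact repr_Wdeg K L r b n
    (Wdeg_prod K L r n _ (fun j => genA_mem_Wdeg K L r b n j) _ Finset.univ) k

lemma det_isHomogeneous {σ : Type*} {s : ℕ}
    (M : Matrix (Fin s) (Fin s) (MvPolynomial σ K)) (c : ℕ)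
    (h : ∀ i j, (M i j).IsHomogeneous c) : M.det.IsHomogeneous (s * c) := by
  rw [Matrix.det_apply]
  apply IsHomogeneous.sum
  intro σ' _
  have hp : (∏ i, M (σ' i) i).IsHomogeneous (s * c) := by
    have := IsHomogeneous.prod Finset.univ (fun i => M (σ' i) i) (fun _ => c)
      (fun i _ => h _ _)
    simpa using this
  rcases Int.units_eq_one_or (Equiv.Perm.sign σ') with hs | hs <;> rw [hs]
  · simpa using hp
  · simpa using hp.neg



end Stmt6Aux

end Stmt6AuxSection

open MvPolynomial Module

/-- **Proposition (existence of minors).** Let `K` be a field, `L` a commutative `K`-algebra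
with a fixed `K`-vector-space isomorphism `e : L ≅ K^r`, and `n, d ≥ 1` with
`m = (n+d).choose n`. Then there are finitely many homogeneous polynomials `H_1, …, H_t` in
`r(n+1)` variables (indexed by `Fin (n+1) × Fin r`) over `K` such that for every field
extension `K'/K`, setting `L' = K' ⊗[K] L`, and every `P ∈ (L')^{n+1}`, the space of
degree-`d` forms over `K'` vanishing at `P` has `K'`-dimension strictly greater than
`max (m - r) 0 = m - r` iff all the `H_i` vanish at `φ(P)`, where `φ` is induced by `e`
(coordinates of the entries of `P` with respect to the base-changed basis of `L`). -/
theorem stmt6 (K : Type u) (L : Type v) [Field K] [CommRing L] [Algebra K L]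
    (r : ℕ) (e : L ≃ₗ[K] (Fin r → K)) (n d : ℕ) (hn : 1 ≤ n) (hd : 1 ≤ d) :
    ∃ (t : ℕ) (H : Fin t → MvPolynomial (Fin (n + 1) × Fin r) K),
      (∀ i, ∃ c : ℕ, (H i).IsHomogeneous c) ∧
      ∀ (K' : Type w) [Field K'] [Algebra K K'],
        ∀ P : Fin (n + 1) → (K' ⊗[K] L),
          ((n + d).choose n - r <
            Module.finrank K'
              ↥(MvPolynomial.homogeneousSubmodule (Fin (n + 1)) K' d ⊓
                LinearMap.ker
                  (MvPolynomial.aeval (R := K') (S₁ := K' ⊗[K] L) P).toLinearMap))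
          ↔ ∀ i, MvPolynomial.aeval (R := K) (S₁ := K')
              (fun jk : Fin (n + 1) × Fin r =>
                ((Basis.ofEquivFun e).baseChange K').repr (P jk.1) jk.2)
              (H i) = 0 := by
  classical
  set b : Basis (Fin r) K L := Basis.ofEquivFun e with hb
  set m := (n + d).choose n with hm
  set s := min r m with hs
  set en := (Fintype.equivFin
    ((Fin s → Stmt6Aux.DegSet (n + 1) d) × (Fin s → Fin r))).symm with hen
  refine ⟨Fintype.card ((Fin s → Stmt6Aux.DegSet (n + 1) d) × (Fin s → Fin r)),
    fun i => (Matrix.of fun a b' : Fin s =>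
      Stmt6Aux.Epoly K L b n ((en i).1 a).1 ((en i).2 b')).det, ?_, ?_⟩
  · intro i
    refine ⟨s * d, Stmt6Aux.det_isHomogeneous K _ d fun a b' => ?_⟩
    have h := Stmt6Aux.Epoly_isHomogeneous K L r b n ((en i).1 a).1 ((en i).2 b')
    rwa [((en i).1 a).2] at h
  · intro K' _ _ P
    set c : Fin (n + 1) × Fin r → K' :=
      fun jk : Fin (n + 1) × Fin r => (b.baseChange K').repr (P jk.1) jk.2 with hc
    set u : Stmt6Aux.DegSet (n + 1) d → K' ⊗[K] L :=
      fun μ => aeval P (monomial μ.1 (1 : K')) with hu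
    set M : Matrix (Stmt6Aux.DegSet (n + 1) d) (Fin r) K' :=
      Matrix.of (fun μ k => (b.baseChange K').equivFun (u μ) k) with hM
    set V := homogeneousSubmodule (Fin (n + 1)) K' d with hV
    set g := (aeval (R := K') (S₁ := K' ⊗[K] L) P).toLinearMap with hg
    haveI : FiniteDimensional K' ↥V := by rw [hV]; infer_instance
    have hVfin : finrank K' ↥V = m := by
      rw [hV, Stmt6Aux.finrank_homog K' (n + 1) d, hm, Stmt6Aux.card_degSet n d]
    have e1 : finrank K' ↥(V ⊓ LinearMap.ker g)
        = finrank K' (LinearMap.ker (g.domRestrict V)) := by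
      have h1 : Submodule.comap V.subtype (V ⊓ LinearMap.ker g)
          = LinearMap.ker (g.domRestrict V) := by
        rw [Submodule.comap_inf, Submodule.comap_subtype_self,
          ← LinearMap.ker_domRestrict, top_inf_eq]
      rw [← h1]
      exact (Submodule.comapSubtypeEquivOfLe inf_le_left).finrank_eq.symm
    have e2 : finrank K' (LinearMap.range (g.domRestrict V)) +
        finrank K' (LinearMap.ker (g.domRestrict V)) = m := by
      rw [LinearMap.finrank_range_add_finrank_ker, hVfin]
    have e3 : LinearMap.range (g.domRestrict V) = Submodule.span K' (Set.range u) := by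
      rw [LinearMap.range_domRestrict, hV, Stmt6Aux.homog_eq_span K' (n + 1) d,
        Submodule.map_span, ← Set.range_comp, hg, hu]
      rfl
    have e4 : M.rank = finrank K' (Submodule.span K' (Set.range u)) := by
      rw [Matrix.rank_eq_finrank_span_row]
      show finrank K' (Submodule.span K' (Set.range M)) = _
      have himg : Set.range M
          = ⇑((b.baseChange K').equivFun) '' Set.range u := by
        rw [← Set.range_comp, hM]
        rfl
      rw [himg, Submodule.span_image_linearEquiv]
      exact LinearEquiv.finrank_map_eq _ _
    have hrank_le : M.rank ≤ m := by
      have h5 := Matrix.rank_le_card_height M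
      rwa [Stmt6Aux.card_degSet n d, ← hm] at h5
    have hdim : finrank K' ↥(V ⊓ LinearMap.ker g) = m - M.rank := by
      have h6 : finrank K' (LinearMap.range (g.domRestrict V)) = M.rank := by
        rw [e3, e4]
      omega
    have hmain : (m - r < finrank K' ↥(V ⊓ LinearMap.ker g)) ↔ M.rank < s := by
      rw [hdim, hs]
      omega
    rw [hmain, Stmt6Aux.rank_lt_iff_minors]
    have hentry : ∀ (μ : Stmt6Aux.DegSet (n + 1) d) (k : Fin r),
        M μ k = aeval c (Stmt6Aux.Epoly K L b n μ.1 k) := by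
      intro μ k
      have h2 := Stmt6Aux.aeval_Epoly K L b n P μ.1 k
      rw [← hc] at h2
      rw [h2, hM]
      show (b.baseChange K').equivFun (u μ) k = _
      rw [Basis.equivFun_apply, hu]
      show ((b.baseChange K').repr (aeval P (monomial μ.1 (1 : K')))) k = _
      rw [Stmt6Aux.aeval_monomial_one]
    have hdet : ∀ (α : Fin s → Stmt6Aux.DegSet (n + 1) d) (β : Fin s → Fin r),
        (M.submatrix α β).det
          = aeval c ((Matrix.of fun a b' : Fin s =>
              Stmt6Aux.Epoly K L b n (α a).1 (β b')).det) := by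
      intro α β
      rw [AlgHom.map_det]
      congr 1
      ext a b'
      simp only [Matrix.submatrix_apply, AlgHom.mapMatrix_apply, Matrix.map_apply,
        Matrix.of_apply]
      exact hentry (α a) (β b')
    constructor
    · intro h i
      rw [← hdet (en i).1 (en i).2]
      exact h _ _
    · intro h α β
      have h2 := h ((Fintype.equivFin
        ((Fin s → Stmt6Aux.DegSet (n + 1) d) × (Fin s → Fin r))) (α, β))
      rw [hdet α β]
      simp only [hen, Equiv.symm_apply_apply] at h2
      exact h2
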